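/- Let f and g be polynomials in two complex variables, and let J = (∂f/∂x)(∂g/∂y) − (∂f/∂y)(∂g/∂x) be their Jacobian determinant. Then f and g are algebraically independent over ℂ if and only if J is not the zero polynomial. -/

import Mathlib

open MvPolynomial Finset

namespace JacHelper


lemma coeff_pderiv {σ : Type*} [DecidableEq σ] (i : σ) (h : MvPolynomial σ ℂ)
    (m : σ →₀ ℕ) :
    coeff m (pderiv i h) = (m i + 1 : ℂ) * coeff (m + Finsupp.single i 1) h := by
  induction h using MvPolynomial.induction_on' with
  | add p q hp hq => simp [map_add, hp, hq]; ring
  | monomial s a =>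
      rw [pderiv_monomial, coeff_monomial, coeff_monomial]
      split_ifs with h1 h2 h2
      · subst h2
        rw [Finsupp.add_apply, Finsupp.single_eq_same]
        push_cast; ring
      · -- s - single i 1 = m but s ≠ m + single i 1 : then s i = 0
        rcases Nat.eq_zero_or_pos (s i) with hs | hs
        · simp [hs]
        · exfalso; apply h2
          rw [← h1]
          ext a
          rcases eq_or_ne a i with rfl | ha
          · simp [Nat.sub_add_cancel hs]
          · simp [Finsupp.single_eq_of_ne ha]
      · exfalso; apply h1; subst h2; ext a
        rcases eq_or_ne a i with rfl | ha
        · simp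
        · simp [Finsupp.single_eq_of_ne (Ne.symm ha)]
      · ring

lemma support_zero_of_pderiv_eq_zero {σ : Type*} [DecidableEq σ] {i : σ}
    {h : MvPolynomial σ ℂ} (hp : pderiv i h = 0) (m : σ →₀ ℕ) (hm : coeff m h ≠ 0) :
    m i = 0 := by
  by_contra hne
  have h1 := coeff_pderiv i h (m - Finsupp.single i 1)
  rw [hp] at h1
  have hle : Finsupp.single i 1 ≤ m := by
    rw [Finsupp.single_le_iff]; omega
  rw [tsub_add_cancel_of_le hle] at h1
  have hkey : ((m - Finsupp.single i 1 : σ →₀ ℕ) i) = m i - 1 := by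
    rw [Finsupp.tsub_apply, Finsupp.single_eq_same]
  have : ((((m - Finsupp.single i 1 : σ →₀ ℕ) i) : ℂ)) + 1 ≠ 0 := by
    rw [hkey]
    have h2 : ((m i - 1 : ℕ) : ℂ) + 1 = ((m i - 1 + 1 : ℕ) : ℂ) := by push_cast; ring
    rw [h2]
    exact Nat.cast_ne_zero.2 (by omega)
  simp only [coeff_zero] at h1
  exact hm (by rcases mul_eq_zero.1 h1.symm with h | h; exact absurd h this; exact h)

lemma eq_C_of_pderiv_eq_zero {h : MvPolynomial (Fin 2) ℂ}
    (hp : ∀ i, pderiv i h = 0) : h = C (coeff 0 h) := by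
  ext m
  rcases eq_or_ne m 0 with rfl | hm
  · simp
  · rw [coeff_C, if_neg (Ne.symm hm)]
    by_contra hc
    apply hm
    ext i
    exact support_zero_of_pderiv_eq_zero (hp i) m hc

lemma totalDegree_pderiv_lt {σ : Type*} [DecidableEq σ] (i : σ) {h : MvPolynomial σ ℂ}
    (hne : pderiv i h ≠ 0) : (pderiv i h).totalDegree < h.totalDegree := by
  obtain ⟨m0, hm0⟩ := (support_nonempty.2 hne)
  have key : ∀ m ∈ (pderiv i h).support, (m.sum fun _ e => e) < h.totalDegree := by
    intro m hm
    have hc : coeff m (pderiv i h) ≠ 0 := mem_support_iff.1 hm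
    rw [coeff_pderiv] at hc
    have hc2 : coeff (m + Finsupp.single i 1) h ≠ 0 := by
      intro h0; rw [h0, mul_zero] at hc; exact hc rfl
    have := le_totalDegree (mem_support_iff.2 hc2)
    have hsum : ((m + Finsupp.single i 1).sum fun _ e => e) = (m.sum fun _ e => e) + 1 := by
      rw [Finsupp.sum_add_index' (fun _ => rfl) (fun _ _ _ => rfl), Finsupp.sum_single_index rfl]
    omega
  rw [totalDegree]
  exact Finset.sup_lt_iff (by exact lt_of_le_of_lt (Nat.zero_le _) (key m0 hm0)) |>.2 key



-- chain rule
lemma chain {n : ℕ} (v : Fin n → MvPolynomial (Fin 2) ℂ) (h : MvPolynomial (Fin n) ℂ)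
    (i : Fin 2) :
    pderiv i (aeval v h) = ∑ j, aeval v (pderiv j h) * pderiv i (v j) := by
  induction h using MvPolynomial.induction_on with
  | C a => simp [algebraMap_eq]
  | add p q hp hq =>
      rw [map_add, map_add, hp, hq, ← Finset.sum_add_distrib]
      exact Finset.sum_congr rfl fun k _ => by rw [map_add, map_add, add_mul]
  | mul_X p j hp =>
      have key : ∀ k : Fin n, aeval v (pderiv k (p * X j)) * pderiv i (v k)
          = aeval v (pderiv k p) * pderiv i (v k) * v j
            + (if k = j then aeval v p * pderiv i (v k) else 0) := by
        intro k
        rw [Derivation.leibniz, pderiv_X, smul_eq_mul, smul_eq_mul, map_add, map_mul, map_mul,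
          aeval_X]
        by_cases hkj : k = j
        · subst hkj
          simp [Pi.single_eq_same]
          ring
        · simp [Pi.single_eq_of_ne (Ne.symm hkj), hkj]
          ring
      rw [Finset.sum_congr rfl fun k _ => key k, Finset.sum_add_distrib, ← Finset.sum_mul,
        ← hp, Finset.sum_ite_eq' Finset.univ j]
      rw [map_mul, aeval_X, Derivation.leibniz, smul_eq_mul, smul_eq_mul]
      simp
      ring

lemma indep_of_J (f g J : MvPolynomial (Fin 2) ℂ)
    (hJ : J = pderiv 0 f * pderiv 1 g - pderiv 1 f * pderiv 0 g) (hJne : J ≠ 0) :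
    ∀ h : MvPolynomial (Fin 2) ℂ, aeval ![f, g] h = 0 → h = 0 := by
  suffices H : ∀ n, ∀ h : MvPolynomial (Fin 2) ℂ,
      h.totalDegree ≤ n → aeval ![f, g] h = 0 → h = 0 from
    fun h => H h.totalDegree h le_rfl
  intro n
  induction n with
  | zero =>
      intro h hdeg h0
      have hconst : ∀ i : Fin 2, pderiv i h = 0 := by
        intro i; by_contra hne
        have := totalDegree_pderiv_lt i hne
        omega
      have hC := eq_C_of_pderiv_eq_zero hconst
      rw [hC] at h0 ⊢
      simp only [aeval_C, map_eq_zero] at h0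
      rw [h0, map_zero]
  | succ n ih =>
      intro h hdeg h0
      have E : ∀ i : Fin 2,
          aeval ![f, g] (pderiv 0 h) * pderiv i f + aeval ![f, g] (pderiv 1 h) * pderiv i g = 0 := by
        intro i
        have hc := chain ![f, g] h i
        rw [h0, map_zero, Fin.sum_univ_two] at hc
        simpa using hc.symm
      have e0 := E 0
      have e1 := E 1
      set A := aeval ![f, g] (pderiv 0 h) with hAdef
      set B := aeval ![f, g] (pderiv 1 h) with hBdef
      have hA : A * J = 0 := by
        rw [hJ]; linear_combination (pderiv 1 g) * e0 - (pderiv 0 g) * e1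
      have hB : B * J = 0 := by
        rw [hJ]; linear_combination (pderiv 0 f) * e1 - (pderiv 1 f) * e0
      have hA0 : A = 0 := by
        rcases mul_eq_zero.1 hA with h' | h'
        · exact h'
        · exact absurd h' hJne
      have hB0 : B = 0 := by
        rcases mul_eq_zero.1 hB with h' | h'
        · exact h'
        · exact absurd h' hJne
      have p0 : pderiv (0 : Fin 2) h = 0 := by
        by_cases hne : pderiv (0 : Fin 2) h = 0
        · exact hne
        · exact ih _ (by have := totalDegree_pderiv_lt (0 : Fin 2) hne; omega) hA0
      have p1 : pderiv (1 : Fin 2) h = 0 := by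
        by_cases hne : pderiv (1 : Fin 2) h = 0
        · exact hne
        · exact ih _ (by have := totalDegree_pderiv_lt (1 : Fin 2) hne; omega) hB0
      have hconst : ∀ i : Fin 2, pderiv i h = 0 := by
        intro i; fin_cases i
        · exact p0
        · exact p1
      have hC := eq_C_of_pderiv_eq_zero hconst
      rw [hC] at h0 ⊢
      simp only [aeval_C, map_eq_zero] at h0
      rw [h0, map_zero]



lemma card_helper (N : ℕ) : ∀ (t : Fin 2 →₀ ℕ) (i : Fin 2),
    (t.sum fun _ e => e) ≤ N → t i ≤ N := by
  intro t i ht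
  refine le_trans ?_ ht
  rcases eq_or_ne (t i) 0 with h | h
  · simp [h]
  · exact Finset.single_le_sum (fun _ _ => Nat.zero_le _) (Finsupp.mem_support_iff.2 h)

lemma finrank_le (N : ℕ) :
    Module.finrank ℂ (restrictTotalDegree (Fin 2) ℂ N) ≤ (N + 1) ^ 2 := by
  classical
  have hfin : Finite {s : Fin 2 →₀ ℕ | (s.sum fun _ e => e) ≤ N} := by
    refine Finite.of_injective (fun s => (fun i => (⟨s.1 i, Nat.lt_succ_of_le
      (card_helper N s.1 i s.2)⟩ : Fin (N + 1)) : Fin 2 → Fin (N + 1))) ?_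
    intro s t h
    ext i
    exact congrArg Fin.val (congrFun h i)
  haveI : Fintype {s : Fin 2 →₀ ℕ | (s.sum fun _ e => e) ≤ N} := Fintype.ofFinite _
  unfold restrictTotalDegree
  rw [Module.finrank_eq_card_basis
    (basisRestrictSupport ℂ { n : Fin 2 →₀ ℕ | (n.sum fun _ e => e) ≤ N } :
      Module.Basis _ ℂ (restrictSupport ℂ { n : Fin 2 →₀ ℕ | (n.sum fun _ e => e) ≤ N }))]
  have hinj : Function.Injective
      (fun s : {s : Fin 2 →₀ ℕ | (s.sum fun _ e => e) ≤ N} =>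
        ((⟨s.1 0, Nat.lt_succ_of_le (card_helper N s.1 0 s.2)⟩ : Fin (N + 1)),
         (⟨s.1 1, Nat.lt_succ_of_le (card_helper N s.1 1 s.2)⟩ : Fin (N + 1)))) := by
    intro s t h
    have h0 : s.1 0 = t.1 0 := congrArg Fin.val (congrArg Prod.fst h)
    have h1 : s.1 1 = t.1 1 := congrArg Fin.val (congrArg Prod.snd h)
    ext i
    fin_cases i
    · exact h0
    · exact h1
  calc Fintype.card {s : Fin 2 →₀ ℕ | (s.sum fun _ e => e) ≤ N}
      ≤ Fintype.card (Fin (N + 1) × Fin (N + 1)) := Fintype.card_le_of_injective _ hinj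
    _ = (N + 1) ^ 2 := by simp [sq]

set_option maxHeartbeats 1000000 in
lemma exists_ann (f g p : MvPolynomial (Fin 2) ℂ) :
    ∃ P : MvPolynomial (Fin 3) ℂ, P ≠ 0 ∧ aeval ![f, g, p] P = 0 := by
  by_contra hcon
  push_neg at hcon
  have hinj : ∀ P : MvPolynomial (Fin 3) ℂ, aeval ![f, g, p] P = 0 → P = 0 := by
    intro P h
    by_contra hne
    exact hcon P hne h
  set v : Fin 3 → MvPolynomial (Fin 2) ℂ := ![f, g, p] with hv
  have hker : LinearMap.ker (aeval v :
      MvPolynomial (Fin 3) ℂ →ₐ[ℂ] MvPolynomial (Fin 2) ℂ).toLinearMap = ⊥ :=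
    LinearMap.ker_eq_bot'.2 fun m hm => hinj m hm
  have hw0 := (basisMonomials (Fin 3) ℂ).linearIndependent.map'
    (aeval v : MvPolynomial (Fin 3) ℂ →ₐ[ℂ] MvPolynomial (Fin 2) ℂ).toLinearMap hker
  have hfun : (⇑(aeval v : MvPolynomial (Fin 3) ℂ →ₐ[ℂ] MvPolynomial (Fin 2) ℂ).toLinearMap
      ∘ ⇑(basisMonomials (Fin 3) ℂ)) = fun m : Fin 3 →₀ ℕ => aeval v ((monomial m) (1 : ℂ)) := by
    funext m
    simp [coe_basisMonomials]
  rw [hfun] at hw0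
  have hw : LinearIndependent ℂ
      (fun m : Fin 3 →₀ ℕ => aeval v ((monomial m) (1 : ℂ))) := hw0
  set d := max (max f.totalDegree g.totalDegree) (max p.totalDegree 1) with hd
  have hd1 : 1 ≤ d := le_trans (le_max_right _ _) (le_max_right _ _)
  have hdf : f.totalDegree ≤ d := le_trans (le_max_left _ _) (le_max_left _ _)
  have hdg : g.totalDegree ≤ d := le_trans (le_max_right _ _) (le_max_left _ _)
  have hdp : p.totalDegree ≤ d := le_trans (le_max_left _ _) (le_max_right _ _)
  set m0 := 10 * d * d with hm0
  set N := 3 * m0 * d with hN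
  set ι := Fin (m0 + 1) × Fin (m0 + 1) × Fin (m0 + 1) with hι
  set φ : ι → (Fin 3 →₀ ℕ) := fun x =>
    Finsupp.single 0 (x.1 : ℕ) + Finsupp.single 1 (x.2.1 : ℕ) + Finsupp.single 2 (x.2.2 : ℕ)
    with hφ
  have hφapp : ∀ x : ι, (φ x) 0 = (x.1 : ℕ) ∧ (φ x) 1 = (x.2.1 : ℕ) ∧ (φ x) 2 = (x.2.2 : ℕ) := by
    intro x
    refine ⟨?_, ?_, ?_⟩ <;>
      simp [hφ, Finsupp.single_apply, Finsupp.add_apply, Fin.ext_iff]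
  have hφinj : Function.Injective φ := by
    intro x y h
    obtain ⟨h0x, h1x, h2x⟩ := hφapp x
    obtain ⟨h0y, h1y, h2y⟩ := hφapp y
    rw [h] at h0x h1x h2x
    exact Prod.ext (Fin.ext (h0x.symm.trans h0y))
      (Prod.ext (Fin.ext (h1x.symm.trans h1y)) (Fin.ext (h2x.symm.trans h2y)))
  have hmono : ∀ x : ι, (monomial (φ x) (1 : ℂ) : MvPolynomial (Fin 3) ℂ)
      = X 0 ^ (x.1 : ℕ) * X 1 ^ (x.2.1 : ℕ) * X 2 ^ (x.2.2 : ℕ) := by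
    intro x
    rw [X_pow_eq_monomial, X_pow_eq_monomial, X_pow_eq_monomial, monomial_mul, monomial_mul]
    simp [hφ]
  have haeval : ∀ x : ι, aeval v ((monomial (φ x)) (1 : ℂ))
      = f ^ (x.1 : ℕ) * g ^ (x.2.1 : ℕ) * p ^ (x.2.2 : ℕ) := by
    intro x
    rw [hmono x]
    simp [hv]
  have hmem : ∀ x : ι, aeval v ((monomial (φ x)) (1 : ℂ)) ∈ restrictTotalDegree (Fin 2) ℂ N := by
    intro x
    rw [mem_restrictTotalDegree, haeval x]
    calc (f ^ (x.1 : ℕ) * g ^ (x.2.1 : ℕ) * p ^ (x.2.2 : ℕ)).totalDegree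
        ≤ (f ^ (x.1 : ℕ) * g ^ (x.2.1 : ℕ)).totalDegree + (p ^ (x.2.2 : ℕ)).totalDegree :=
          totalDegree_mul _ _
      _ ≤ (f ^ (x.1 : ℕ)).totalDegree + (g ^ (x.2.1 : ℕ)).totalDegree
            + (p ^ (x.2.2 : ℕ)).totalDegree := by
          have := totalDegree_mul (f ^ (x.1 : ℕ)) (g ^ (x.2.1 : ℕ))
          omega
      _ ≤ (x.1 : ℕ) * f.totalDegree + (x.2.1 : ℕ) * g.totalDegree
            + (x.2.2 : ℕ) * p.totalDegree := by
          have h1 := totalDegree_pow f (x.1 : ℕ)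
          have h2 := totalDegree_pow g (x.2.1 : ℕ)
          have h3 := totalDegree_pow p (x.2.2 : ℕ)
          omega
      _ ≤ N := by
          have b1 : (x.1 : ℕ) ≤ m0 := Nat.lt_succ_iff.1 x.1.isLt
          have b2 : (x.2.1 : ℕ) ≤ m0 := Nat.lt_succ_iff.1 x.2.1.isLt
          have b3 : (x.2.2 : ℕ) ≤ m0 := Nat.lt_succ_iff.1 x.2.2.isLt
          have := Nat.mul_le_mul b1 hdf
          have := Nat.mul_le_mul b2 hdg
          have := Nat.mul_le_mul b3 hdp
          rw [hN]
          nlinarith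
  set u : ι → restrictTotalDegree (Fin 2) ℂ N :=
    fun x => ⟨aeval v ((monomial (φ x)) (1 : ℂ)), hmem x⟩ with hu
  have hui : LinearIndependent ℂ u := by
    apply LinearIndependent.of_comp (restrictTotalDegree (Fin 2) ℂ N).subtype
    exact hw.comp φ hφinj
  have hcard := hui.fintype_card_le_finrank
  have hcard2 : Fintype.card ι = (m0 + 1) ^ 3 := by
    simp [hι]
    ring
  have hfr := finrank_le N
  rw [hcard2] at hcard
  have : (m0 + 1) ^ 3 ≤ (N + 1) ^ 2 := le_trans hcard hfr
  rw [hN, hm0] at this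
  nlinarith [hd1, sq_nonneg d, sq_nonneg (d*d)]



lemma exists_min_ann (f g q : MvPolynomial (Fin 2) ℂ)
    (hInd : ∀ h : MvPolynomial (Fin 2) ℂ, aeval ![f, g] h = 0 → h = 0) :
    ∃ P : MvPolynomial (Fin 3) ℂ, P ≠ 0 ∧ aeval ![f, g, q] P = 0 ∧
      aeval ![f, g, q] (pderiv 2 P) ≠ 0 := by
  set v : Fin 3 → MvPolynomial (Fin 2) ℂ := ![f, g, q] with hv
  have hex : ∃ n : ℕ, ∃ P : MvPolynomial (Fin 3) ℂ,
      P ≠ 0 ∧ aeval v P = 0 ∧ P.totalDegree = n := by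
    obtain ⟨P, hP0, hPa⟩ := exists_ann f g q
    exact ⟨P.totalDegree, P, hP0, hPa, rfl⟩
  classical
  obtain ⟨P, hP0, hPa, hPd⟩ := Nat.find_spec hex
  refine ⟨P, hP0, hPa, ?_⟩
  intro hC
  by_cases hzero : pderiv 2 P = 0
  · -- P does not involve the third variable
    have he : Function.Injective (Fin.castSucc : Fin 2 → Fin 3) :=
      Fin.castSucc_injective 2
    have hsup : P ∈ supported ℂ (Set.range (Fin.castSucc : Fin 2 → Fin 3)) := by
      rw [mem_supported]
      intro i hi
      obtain ⟨m, hm, him⟩ := (mem_vars i).1 hi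
      have hm2 : m 2 = 0 :=
        support_zero_of_pderiv_eq_zero hzero m (mem_support_iff.1 hm)
      have hi2 : i ≠ 2 := by
        intro hieq
        subst hieq
        exact (Finsupp.mem_support_iff.1 him) hm2
      have hilt : (i : ℕ) < 2 := by
        have h3 := i.isLt
        have h4 : (i : ℕ) ≠ 2 := fun hc => hi2 (Fin.ext hc)
        omega
      exact ⟨⟨(i : ℕ), hilt⟩, Fin.ext rfl⟩
    rw [supported_eq_range_rename] at hsup
    obtain ⟨P', hP'⟩ := hsup
    set eqv := Equiv.ofInjective _ he with heqv
    set Q : MvPolynomial (Fin 2) ℂ := rename eqv.symm P' with hQ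
    have hren : rename (Fin.castSucc : Fin 2 → Fin 3) Q = P := by
      rw [hQ, rename_rename]
      rw [show ((Fin.castSucc : Fin 2 → Fin 3) ∘ eqv.symm) =
        (Subtype.val : Set.range (Fin.castSucc : Fin 2 → Fin 3) → Fin 3) from
        funext fun x => Equiv.apply_ofInjective_symm he x]
      exact hP'
    have hcomp : v ∘ (Fin.castSucc : Fin 2 → Fin 3) = ![f, g] := by
      funext i
      fin_cases i <;> simp [hv]
    have hQann : aeval ![f, g] Q = 0 := by
      rw [← hcomp, ← aeval_rename, hren, hPa]
    have hQ0 : Q = 0 := hInd Q hQann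
    rw [hQ0, map_zero] at hren
    exact hP0 hren.symm
  · -- pderiv 2 P is a smaller nonzero annihilator
    have hlt : (pderiv 2 P).totalDegree < P.totalDegree := totalDegree_pderiv_lt 2 hzero
    have hmin := Nat.find_min hex (m := (pderiv 2 P).totalDegree) (by omega)
    exact hmin ⟨pderiv 2 P, hzero, hC, rfl⟩



lemma J_ne_zero (f g J : MvPolynomial (Fin 2) ℂ)
    (hJ : J = pderiv 0 f * pderiv 1 g - pderiv 1 f * pderiv 0 g)
    (hInd : ∀ h : MvPolynomial (Fin 2) ℂ, aeval ![f, g] h = 0 → h = 0) :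
    J ≠ 0 := by
  intro hJ0
  have hrel : pderiv 0 f * pderiv 1 g - pderiv 1 f * pderiv 0 g = 0 := by
    rw [← hJ]; exact hJ0
  -- annihilator with third slot X 0
  obtain ⟨P, hP0, hPa, hPC⟩ := exists_min_ann f g (X 0) hInd
  obtain ⟨Q, hQ0, hQa, hQC⟩ := exists_min_ann f g (X 1) hInd
  set vP : Fin 3 → MvPolynomial (Fin 2) ℂ := ![f, g, X 0] with hvP
  set vQ : Fin 3 → MvPolynomial (Fin 2) ℂ := ![f, g, X 1] with hvQ
  have EP : ∀ i : Fin 2,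
      aeval vP (pderiv 0 P) * pderiv i f + aeval vP (pderiv 1 P) * pderiv i g
        + aeval vP (pderiv 2 P) * pderiv i (X 0 : MvPolynomial (Fin 2) ℂ) = 0 := by
    intro i
    have hc := chain vP P i
    rw [hPa, map_zero, Fin.sum_univ_three] at hc
    simpa [hvP] using hc.symm
  have EQ : ∀ i : Fin 2,
      aeval vQ (pderiv 0 Q) * pderiv i f + aeval vQ (pderiv 1 Q) * pderiv i g
        + aeval vQ (pderiv 2 Q) * pderiv i (X 1 : MvPolynomial (Fin 2) ℂ) = 0 := by
    intro i
    have hc := chain vQ Q i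
    rw [hQa, map_zero, Fin.sum_univ_three] at hc
    simpa [hvQ] using hc.symm
  have eP0 := EP 0
  have eP1 := EP 1
  have eQ0 := EQ 0
  have eQ1 := EQ 1
  rw [pderiv_X_self, mul_one] at eP0
  rw [pderiv_X_of_ne (by decide), mul_zero, add_zero] at eP1
  rw [pderiv_X_of_ne (by decide), mul_zero, add_zero] at eQ0
  rw [pderiv_X_self, mul_one] at eQ1
  set A := aeval vP (pderiv 0 P)
  set B := aeval vP (pderiv 1 P)
  set Cc := aeval vP (pderiv 2 P)
  set A' := aeval vQ (pderiv 0 Q)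
  set B' := aeval vQ (pderiv 1 Q)
  set D := aeval vQ (pderiv 2 Q)
  have hdom : ∀ x y : MvPolynomial (Fin 2) ℂ, x * y = 0 → x ≠ 0 → y = 0 := by
    intro x y hxy hx
    rcases mul_eq_zero.1 hxy with h | h
    · exact absurd h hx
    · exact h
  -- gy = 0
  have hgy : pderiv 1 g = 0 := by
    apply hdom Cc _ _ hPC
    linear_combination (pderiv 1 g) * eP0 - (pderiv 0 g) * eP1 - A * hrel
  -- fy = 0
  have hfy : pderiv 1 f = 0 := by
    apply hdom Cc _ _ hPC
    linear_combination (pderiv 1 f) * eP0 - (pderiv 0 f) * eP1 + B * hrel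
  -- gx = 0
  have hgx : pderiv 0 g = 0 := by
    apply hdom D _ _ hQC
    linear_combination (pderiv 0 g) * eQ1 - (pderiv 1 g) * eQ0 + A' * hrel
  -- fx = 0
  have hfx : pderiv 0 f = 0 := by
    apply hdom D _ _ hQC
    linear_combination (pderiv 0 f) * eQ1 - (pderiv 1 f) * eQ0 - B' * hrel
  have hfC : f = C (coeff 0 f) := eq_C_of_pderiv_eq_zero (fun i => by
    fin_cases i
    · exact hfx
    · exact hfy)
  have hXC : (X 0 : MvPolynomial (Fin 2) ℂ) - C (coeff 0 f) = 0 := by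
    apply hInd
    rw [map_sub, aeval_X, aeval_C]
    simp [hvP]
    conv_lhs => rw [hfC]
    simp [algebraMap_eq]
  have hco := congrArg (coeff (Finsupp.single 0 1)) hXC
  simp only [coeff_sub, coeff_X, coeff_C, coeff_zero] at hco
  rw [if_neg (show ¬ ((0 : Fin 2 →₀ ℕ) = Finsupp.single 0 1) from fun hc => by simpa using (Finsupp.single_eq_zero.1 hc.symm))] at hco
  simpa using hco


end JacHelper

/-- Two polynomials `f, g ∈ ℂ[x,y]` are algebraically independent over `ℂ` if and only if
their Jacobian determinant is not the zero polynomial. -/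
theorem algebraically_independent_iff_jacobian_ne_zero
    (f g : MvPolynomial (Fin 2) ℂ)
    (J : MvPolynomial (Fin 2) ℂ)
    (hJ : J = pderiv 0 f * pderiv 1 g - pderiv 1 f * pderiv 0 g) :
    (∀ h : MvPolynomial (Fin 2) ℂ, aeval ![f, g] h = 0 → h = 0) ↔ J ≠ 0 := by
  constructor
  · intro hInd
    exact JacHelper.J_ne_zero f g J hJ hInd
  · intro hJne
    exact JacHelper.indep_of_J f g J hJ hJne
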